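/- Suppose δ̄₃† κ² < 1/4. Then the minimizer υ̃ satisfies ‖F^{1/2}(υ̃ − υ*)‖ ≤ (4/3) r and ‖D(υ̃ − υ*)‖ ≤ (4κ/3) r. -/

import Mathlib

open MeasureTheory RealInnerProductSpace Matrix

/-- Application of a matrix to a vector in Euclidean space. -/
noncomputable def mApp {p q : ℕ} (M : Matrix (Fin q) (Fin p) ℝ)
    (v : EuclideanSpace ℝ (Fin p)) : EuclideanSpace ℝ (Fin q) :=
  Matrix.toEuclideanLin M v

/-- Operator norm of (the Euclidean linear map induced by) a matrix. -/
noncomputable def mopNorm {p q : ℕ} (M : Matrix (Fin q) (Fin p) ℝ) : ℝ :=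
  ‖(LinearMap.toContinuousLinearMap (Matrix.toEuclideanLin M))‖

/-- The positive semidefinite square root of a positive semidefinite matrix
(the definition `Matrix.PosSemidef.sqrt` of the older Mathlib, removed since). -/
noncomputable def Matrix.PosSemidef.sqrt {𝕜 : Type*} [RCLike 𝕜] [PartialOrder 𝕜] {n : Type*} [Fintype n]
    [DecidableEq n] {A : Matrix n n 𝕜} (hA : A.PosSemidef) : Matrix n n 𝕜 :=
  hA.1.eigenvectorUnitary.1 * Matrix.diagonal ((↑) ∘ (√·) ∘ hA.1.eigenvalues) *
    (star hA.1.eigenvectorUnitary : Matrix n n 𝕜)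

lemma Matrix.PosSemidef.sqrt_isHermitian' {n : ℕ} {A : Matrix (Fin n) (Fin n) ℝ}
    (hA : A.PosSemidef) : hA.sqrt.IsHermitian := by
  simp [Matrix.PosSemidef.sqrt, Matrix.IsHermitian, Matrix.mul_assoc,
    Matrix.star_eq_conjTranspose]

lemma Matrix.PosSemidef.sqrt_mul_self' {n : ℕ} {A : Matrix (Fin n) (Fin n) ℝ}
    (hA : A.PosSemidef) : hA.sqrt * hA.sqrt = A := by
  have hs : A = hA.1.eigenvectorUnitary.1 * Matrix.diagonal (RCLike.ofReal ∘ hA.1.eigenvalues) *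
      (star hA.1.eigenvectorUnitary : Matrix (Fin n) (Fin n) ℝ) := hA.1.spectral_theorem
  have hd : Matrix.diagonal (((↑) : ℝ → ℝ) ∘ (√·) ∘ hA.1.eigenvalues) *
      Matrix.diagonal (((↑) : ℝ → ℝ) ∘ (√·) ∘ hA.1.eigenvalues) =
      Matrix.diagonal (RCLike.ofReal ∘ hA.1.eigenvalues) := by
    rw [Matrix.diagonal_mul_diagonal]
    congr 1; funext i
    simp [Real.mul_self_sqrt (hA.eigenvalues_nonneg i)]
  conv_rhs => rw [hs, ← hd]
  unfold Matrix.PosSemidef.sqrt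
  have hu : (star hA.1.eigenvectorUnitary : Matrix (Fin n) (Fin n) ℝ) * hA.1.eigenvectorUnitary.1 = 1 :=
    Unitary.coe_star_mul_self _
  simp only [Matrix.mul_assoc]
  rw [← Matrix.mul_assoc (star _ : Matrix _ _ ℝ) hA.1.eigenvectorUnitary.1, hu, Matrix.one_mul]
  rfl

variable {p : ℕ}

lemma mApp_inner (M : Matrix (Fin p) (Fin p) ℝ) (x y : EuclideanSpace ℝ (Fin p)) :
    ⟪mApp M x, y⟫ = dotProduct (M *ᵥ (WithLp.equiv 2 _ x)) (WithLp.equiv 2 _ y) := by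
  simp [mApp, Matrix.toEuclideanLin_apply, PiLp.inner_apply, dotProduct, mul_comm]

lemma mApp_mul (A B : Matrix (Fin p) (Fin p) ℝ) (v : EuclideanSpace ℝ (Fin p)) :
    mApp (A * B) v = mApp A (mApp B v) := by
  simp [mApp, Matrix.toEuclideanLin_apply, Matrix.mulVec_mulVec]

lemma mApp_one (v : EuclideanSpace ℝ (Fin p)) : mApp 1 v = v := by
  simp [mApp, Matrix.toEuclideanLin_apply]

lemma mApp_smul (M : Matrix (Fin p) (Fin p) ℝ) (c : ℝ) (v : EuclideanSpace ℝ (Fin p)) :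
    mApp M (c • v) = c • mApp M v := map_smul (Matrix.toEuclideanLin M) c v

lemma mApp_zero (M : Matrix (Fin p) (Fin p) ℝ) : mApp M 0 = 0 :=
  map_zero (Matrix.toEuclideanLin M)

lemma mApp_inner_symm (M : Matrix (Fin p) (Fin p) ℝ) (hM : M.IsHermitian)
    (x y : EuclideanSpace ℝ (Fin p)) : ⟪mApp M x, y⟫ = ⟪x, mApp M y⟫ := by
  have hMt : Mᵀ = M := by
    ext i j
    simpa using congrFun (congrFun hM i) j
  rw [mApp_inner, real_inner_comm, mApp_inner, dotProduct_comm,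
    Matrix.dotProduct_mulVec, ← hMt, Matrix.vecMul_transpose, hMt]

lemma mApp_norm_le (M : Matrix (Fin p) (Fin p) ℝ) (v : EuclideanSpace ℝ (Fin p)) :
    ‖mApp M v‖ ≤ mopNorm M * ‖v‖ :=
  (LinearMap.toContinuousLinearMap (Matrix.toEuclideanLin M)).le_opNorm v

lemma mApp_inner_sq (M : Matrix (Fin p) (Fin p) ℝ) (hM : M.IsHermitian)
    (v : EuclideanSpace ℝ (Fin p)) : ⟪mApp (M * M) v, v⟫ = ‖mApp M v‖ ^ 2 := by
  rw [mApp_mul, mApp_inner_symm M hM, real_inner_self_eq_norm_sq]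

/-- monotonicity of the gradient of a convex differentiable function -/
lemma grad_mono (f : EuclideanSpace ℝ (Fin p) → ℝ) (hconv : ConvexOn ℝ Set.univ f)
    (hdiff : Differentiable ℝ f) (a b : EuclideanSpace ℝ (Fin p)) :
    ⟪gradient f b, a - b⟫ ≤ ⟪gradient f a, a - b⟫ := by
  set g : ℝ →ᵃ[ℝ] EuclideanSpace ℝ (Fin p) := AffineMap.lineMap b a with hg
  have hga : ∀ t : ℝ, g t = b + t • (a - b) := by
    intro t
    simp only [hg, AffineMap.lineMap_apply_module]
    module
  have hφ : ConvexOn ℝ Set.univ (f ∘ g) := by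
    simpa using hconv.comp_affineMap g
  have hd : ∀ t : ℝ, HasDerivAt (f ∘ g) ⟪gradient f (g t), a - b⟫ t := by
    intro t
    have hc : HasDerivAt (fun s : ℝ => b + s • (a - b)) (a - b) t := by
      simpa using ((hasDerivAt_id t).smul_const (a - b)).const_add b
    have hF : HasFDerivAt f (InnerProductSpace.toDual ℝ _ (gradient f (g t))) (g t) :=
      hasGradientAt_iff_hasFDerivAt.1 (hdiff (g t)).hasGradientAt
    have := hF.comp_hasDerivAt t (by simpa [← hga] using hc)
    simpa [Function.comp, hga] using this
  have h1 : ⟪gradient f (g 0), a - b⟫ ≤ slope (f ∘ g) 0 1 :=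
    hφ.le_slope_of_hasDerivAt (Set.mem_univ _) (Set.mem_univ _) one_pos (hd 0)
  have h2 : slope (f ∘ g) 0 1 ≤ ⟪gradient f (g 1), a - b⟫ :=
    hφ.slope_le_of_hasDerivAt (Set.mem_univ _) (Set.mem_univ _) one_pos (hd 1)
  have hg0 : g 0 = b := by simp [hga]
  have hg1 : g 1 = a := by simp [hga]
  rw [hg0] at h1; rw [hg1] at h2
  linarith

lemma grad_min (f : EuclideanSpace ℝ (Fin p) → ℝ) (hdiff : Differentiable ℝ f)
    (ξ υt : EuclideanSpace ℝ (Fin p))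
    (hmin : ∀ υ : EuclideanSpace ℝ (Fin p), f υt + ⟪ξ, υt⟫ ≤ f υ + ⟪ξ, υ⟫) :
    gradient f υt = -ξ := by
  have hfn : (fun v : EuclideanSpace ℝ (Fin p) => ⟪ξ, v⟫) =
      ⇑(InnerProductSpace.toDual ℝ (EuclideanSpace ℝ (Fin p)) ξ) := by
    funext v; simp [InnerProductSpace.toDual_apply_apply]
  have h2 : HasFDerivAt (fun v : EuclideanSpace ℝ (Fin p) => ⟪ξ, v⟫)
      (InnerProductSpace.toDual ℝ (EuclideanSpace ℝ (Fin p)) ξ) υt := by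
    rw [hfn]; exact (InnerProductSpace.toDual ℝ (EuclideanSpace ℝ (Fin p)) ξ).hasFDerivAt
  have h1 : HasFDerivAt f
      (InnerProductSpace.toDual ℝ (EuclideanSpace ℝ (Fin p)) (gradient f υt)) υt :=
    hasGradientAt_iff_hasFDerivAt.1 (hdiff υt).hasGradientAt
  have hL : HasFDerivAt (fun v => f v + ⟪ξ, v⟫) _ υt := h1.add h2
  have hz : IsLocalMin (fun v => f v + ⟪ξ, v⟫) υt := Filter.Eventually.of_forall hmin
  have h0 := hz.fderiv_eq_zero
  rw [hL.fderiv] at h0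
  have h0' : InnerProductSpace.toDual ℝ (EuclideanSpace ℝ (Fin p)) (gradient f υt + ξ) = 0 := by
    rw [map_add]; exact h0
  have := (LinearIsometryEquiv.map_eq_zero_iff _).1 h0'
  exact eq_neg_of_add_eq_zero_left this

lemma grad_lip (f : EuclideanSpace ℝ (Fin p) → ℝ) (hf : ContDiff ℝ 2 f)
    (υs : EuclideanSpace ℝ (Fin p)) (R : ℝ) (hR : 0 ≤ R) :
    ∃ L : ℝ, 0 ≤ L ∧ ∀ u : EuclideanSpace ℝ (Fin p), ‖u‖ ≤ R →
      ‖gradient f (υs + u) - gradient f υs‖ ≤ L * ‖u‖ := by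
  have hcd : ContDiff ℝ 1 (fderiv ℝ f) := hf.fderiv_right (by norm_num)
  have hcont : Continuous (fderiv ℝ (fderiv ℝ f)) := hcd.continuous_fderiv (by norm_num)
  obtain ⟨C, hC⟩ :=
    (isCompact_closedBall υs R).exists_bound_of_continuousOn (f := fderiv ℝ (fderiv ℝ f)) hcont.continuousOn
  refine ⟨max C 0, le_max_right _ _, ?_⟩
  intro u hu
  have h1 : υs + u ∈ Metric.closedBall υs R := by
    rw [Metric.mem_closedBall, dist_eq_norm]
    simpa [add_sub_cancel_left] using hu
  have h2 : υs ∈ Metric.closedBall υs R := Metric.mem_closedBall_self hR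
  have hd := Convex.norm_image_sub_le_of_norm_fderiv_le
    (f := fderiv ℝ f) (C := max C 0) (fun x _ => (hcd.differentiable (by norm_num)) x)
    (fun x hx => le_max_of_le_left (hC x hx)) (convex_closedBall _ _) h2 h1
  have hgr : gradient f (υs + u) - gradient f υs =
      (InnerProductSpace.toDual ℝ (EuclideanSpace ℝ (Fin p))).symm
        (fderiv ℝ f (υs + u) - fderiv ℝ f υs) := by
    rw [map_sub]; rfl
  rw [hgr, LinearIsometryEquiv.norm_map]
  simpa [add_sub_cancel_left] using hd
theorem mle_concentration
    {p : ℕ} (hp : 1 ≤ p)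
    (f : EuclideanSpace ℝ (Fin p) → ℝ)
    (hconv : ConvexOn ℝ Set.univ f)
    (hf : ContDiff ℝ 2 f)
    (υs : EuclideanSpace ℝ (Fin p))
    (hgrad : gradient f υs = 0)
    (F : Matrix (Fin p) (Fin p) ℝ) (hF : F.PosDef)
    (hFdef : ∀ u w : EuclideanSpace ℝ (Fin p),
      iteratedFDeriv ℝ 2 f υs ![u, w] = ⟪mApp F u, w⟫)
    (ξ υt : EuclideanSpace ℝ (Fin p))
    (hmin : ∀ υ : EuclideanSpace ℝ (Fin p), f υt + ⟪ξ, υt⟫ ≤ f υ + ⟪ξ, υ⟫)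
    (D : Matrix (Fin p) (Fin p) ℝ) (hD : D.PosDef)
    (κ : ℝ) (hκ : 0 < κ)
    (hLoew : (κ ^ 2 • F - D * D).PosSemidef)
    (r : ℝ) (hrpos : 0 < r)
    (hξr : ‖mApp hF.posSemidef.sqrt⁻¹ ξ‖ ≤ r)
    (ω δ3 : ℝ)
    (hω : ω = sSup {x : ℝ | ∃ u : EuclideanSpace ℝ (Fin p), u ≠ 0 ∧
      ‖mApp hF.posSemidef.sqrt u‖ ≤ 4 / 3 * r ∧
      x = 2 * |f (υs + u) - f υs - ⟪gradient f υs, u⟫ - 1 / 2 * ⟪mApp F u, u⟫| /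
        ‖mApp D u‖ ^ 2})
    (hδ3 : δ3 = sSup {x : ℝ | ∃ u : EuclideanSpace ℝ (Fin p), u ≠ 0 ∧
      ‖mApp hF.posSemidef.sqrt u‖ ≤ 4 / 3 * r ∧
      x = |⟪gradient f (υs + u) - gradient f υs, u⟫ - ⟪mApp F u, u⟫| /
        ‖mApp D u‖ ^ 2})
    (hmain : δ3 * κ ^ 2 < 1 / 4) :
    ‖mApp hF.posSemidef.sqrt (υt - υs)‖ ≤ 4 / 3 * r ∧
      ‖mApp D (υt - υs)‖ ≤ 4 * κ / 3 * r := by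
  classical
  have hdiff : Differentiable ℝ f := hf.differentiable (by norm_num)
  set S : Matrix (Fin p) (Fin p) ℝ := hF.posSemidef.sqrt with hSdef
  have hSh : S.IsHermitian := hF.posSemidef.sqrt_isHermitian'
  have hSS : S * S = F := hF.posSemidef.sqrt_mul_self'
  have hdetS : IsUnit S.det := by
    rw [isUnit_iff_ne_zero]
    intro h
    have hdF : F.det = 0 := by rw [← hSS, Matrix.det_mul, h, mul_zero]
    exact hF.det_pos.ne' hdF
  have hSSinv : S * S⁻¹ = 1 := Matrix.mul_nonsing_inv _ hdetS
  have hSinvS : S⁻¹ * S = 1 := Matrix.nonsing_inv_mul _ hdetS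
  have hdetD : IsUnit D.det := (Matrix.isUnit_iff_isUnit_det _).1 hD.isUnit
  have hDinvD : D⁻¹ * D = 1 := Matrix.nonsing_inv_mul _ hdetD
  have hFinner : ∀ v : EuclideanSpace ℝ (Fin p), ⟪mApp F v, v⟫ = ‖mApp S v‖ ^ 2 := by
    intro v; rw [← hSS]; exact mApp_inner_sq S hSh v
  have hDinner : ∀ v : EuclideanSpace ℝ (Fin p), ⟪mApp (D * D) v, v⟫ = ‖mApp D v‖ ^ 2 :=
    mApp_inner_sq D hD.1
  have hLo : ∀ v : EuclideanSpace ℝ (Fin p), ‖mApp D v‖ ^ 2 ≤ κ ^ 2 * ‖mApp S v‖ ^ 2 := by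
    intro v
    have h := hLoew.dotProduct_mulVec_nonneg (WithLp.equiv 2 _ v)
    rw [star_trivial] at h
    have eF : ⟪mApp F v, v⟫ =
        dotProduct (WithLp.equiv 2 _ v) (F *ᵥ (WithLp.equiv 2 _ v)) := by
      rw [mApp_inner, dotProduct_comm]
    have eD : ⟪mApp (D * D) v, v⟫ =
        dotProduct (WithLp.equiv 2 _ v) ((D * D) *ᵥ (WithLp.equiv 2 _ v)) := by
      rw [mApp_inner, dotProduct_comm]
    simp only [Matrix.sub_mulVec, Matrix.smul_mulVec, dotProduct_sub,
      dotProduct_smul, smul_eq_mul] at h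
    rw [← eF, ← eD, hFinner, hDinner] at h
    linarith
  have hxiv : ∀ v : EuclideanSpace ℝ (Fin p), -⟪ξ, v⟫ ≤ r * ‖mApp S v‖ := by
    intro v
    have e : ⟪ξ, v⟫ = ⟪mApp S⁻¹ ξ, mApp S v⟫ := by
      have h' := mApp_inner_symm S hSh (mApp S⁻¹ ξ) v
      rw [← mApp_mul, hSSinv, mApp_one] at h'
      exact h'
    calc -⟪ξ, v⟫ ≤ |⟪ξ, v⟫| := neg_le_abs _
    _ = |⟪mApp S⁻¹ ξ, mApp S v⟫| := by rw [e]
    _ ≤ ‖mApp S⁻¹ ξ‖ * ‖mApp S v‖ := abs_real_inner_le_norm _ _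
    _ ≤ r * ‖mApp S v‖ := mul_le_mul_of_nonneg_right hξr (norm_nonneg _)
  have hmAppD_ne : ∀ v : EuclideanSpace ℝ (Fin p), v ≠ 0 → mApp D v ≠ 0 := by
    intro v hv h
    apply hv
    have hh : mApp D⁻¹ (mApp D v) = v := by rw [← mApp_mul, hDinvD, mApp_one]
    rw [h, mApp_zero] at hh
    exact hh.symm
  have hnormu : ∀ v : EuclideanSpace ℝ (Fin p), ‖v‖ ≤ mopNorm S⁻¹ * ‖mApp S v‖ := by
    intro v
    have hh : v = mApp S⁻¹ (mApp S v) := by rw [← mApp_mul, hSinvS, mApp_one]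
    calc ‖v‖ = ‖mApp S⁻¹ (mApp S v)‖ := by rw [← hh]
    _ ≤ mopNorm S⁻¹ * ‖mApp S v‖ := mApp_norm_le _ _
  have hnormuD : ∀ v : EuclideanSpace ℝ (Fin p), ‖v‖ ≤ mopNorm D⁻¹ * ‖mApp D v‖ := by
    intro v
    have hh : v = mApp D⁻¹ (mApp D v) := by rw [← mApp_mul, hDinvD, mApp_one]
    calc ‖v‖ = ‖mApp D⁻¹ (mApp D v)‖ := by rw [← hh]
    _ ≤ mopNorm D⁻¹ * ‖mApp D v‖ := mApp_norm_le _ _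
  have hmopS : (0:ℝ) ≤ mopNorm S⁻¹ := norm_nonneg _
  have hmopD : (0:ℝ) ≤ mopNorm D⁻¹ := norm_nonneg _
  have hmopF : (0:ℝ) ≤ mopNorm F := norm_nonneg _
  obtain ⟨L, hL0, hLip⟩ := grad_lip f hf υs (mopNorm S⁻¹ * (4 / 3 * r)) (by positivity)
  have hBdd : BddAbove {x : ℝ | ∃ u : EuclideanSpace ℝ (Fin p), u ≠ 0 ∧
      ‖mApp S u‖ ≤ 4 / 3 * r ∧
      x = |⟪gradient f (υs + u) - gradient f υs, u⟫ - ⟪mApp F u, u⟫| /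
        ‖mApp D u‖ ^ 2} := by
    refine ⟨(L + mopNorm F) * (mopNorm D⁻¹) ^ 2, ?_⟩
    rintro x ⟨u, hu0, hSu, rfl⟩
    have hDu : mApp D u ≠ 0 := hmAppD_ne u hu0
    have hDu2 : (0:ℝ) < ‖mApp D u‖ ^ 2 := pow_pos (norm_pos_iff.2 hDu) 2
    rw [div_le_iff₀ hDu2]
    have hub : ‖u‖ ≤ mopNorm D⁻¹ * ‖mApp D u‖ := hnormuD u
    have hgd : ‖gradient f (υs + u) - gradient f υs‖ ≤ L * ‖u‖ :=
      hLip u ((hnormu u).trans (mul_le_mul_of_nonneg_left hSu hmopS))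
    have hFu : ‖mApp F u‖ ≤ mopNorm F * ‖u‖ := mApp_norm_le F u
    have h1 : |⟪gradient f (υs + u) - gradient f υs, u⟫ - ⟪mApp F u, u⟫| ≤
        ‖gradient f (υs + u) - gradient f υs‖ * ‖u‖ + ‖mApp F u‖ * ‖u‖ := by
      rw [sub_eq_add_neg]
      refine (abs_add_le _ _).trans ?_
      rw [abs_neg]
      exact add_le_add (abs_real_inner_le_norm _ _) (abs_real_inner_le_norm _ _)
    have hu2 : ‖u‖ ^ 2 ≤ (mopNorm D⁻¹) ^ 2 * ‖mApp D u‖ ^ 2 := by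
      nlinarith [norm_nonneg u, norm_nonneg (mApp D u)]
    calc |⟪gradient f (υs + u) - gradient f υs, u⟫ - ⟪mApp F u, u⟫|
        ≤ ‖gradient f (υs + u) - gradient f υs‖ * ‖u‖ + ‖mApp F u‖ * ‖u‖ := h1
    _ ≤ (L * ‖u‖) * ‖u‖ + (mopNorm F * ‖u‖) * ‖u‖ := by
        refine add_le_add (mul_le_mul_of_nonneg_right hgd (norm_nonneg _))
          (mul_le_mul_of_nonneg_right hFu (norm_nonneg _))
    _ = (L + mopNorm F) * ‖u‖ ^ 2 := by ring
    _ ≤ (L + mopNorm F) * ((mopNorm D⁻¹) ^ 2 * ‖mApp D u‖ ^ 2) :=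
        mul_le_mul_of_nonneg_left hu2 (add_nonneg hL0 hmopF)
    _ = (L + mopNorm F) * (mopNorm D⁻¹) ^ 2 * ‖mApp D u‖ ^ 2 := by ring
  rcases eq_or_ne υt υs with heq | hne
  · rw [heq, sub_self]
    rw [mApp_zero, mApp_zero, norm_zero]
    constructor <;> positivity
  · have hu0 : υt - υs ≠ 0 := sub_ne_zero.2 hne
    have hgt : gradient f υt = -ξ := grad_min f hdiff ξ υt hmin
    have hmain1 : ‖mApp S (υt - υs)‖ ≤ 4 / 3 * r := by
      by_contra hgt'
      push_neg at hgt'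
      set u0 := υt - υs with hu0def
      have hnS : (0:ℝ) < ‖mApp S u0‖ := lt_trans (by positivity) hgt'
      set t : ℝ := (4 / 3 * r) / ‖mApp S u0‖ with htdef
      have ht0 : 0 < t := div_pos (by positivity) hnS
      have ht1 : t < 1 := (div_lt_one hnS).2 hgt'
      set v : EuclideanSpace ℝ (Fin p) := t • u0 with hvdef
      have hSv : ‖mApp S v‖ = 4 / 3 * r := by
        rw [hvdef, mApp_smul, norm_smul, Real.norm_eq_abs, abs_of_pos ht0, htdef,
          div_mul_cancel₀ _ hnS.ne']
      have hv0 : v ≠ 0 := smul_ne_zero ht0.ne' hu0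
      have hDvne := hmAppD_ne v hv0
      have hDvpos : (0:ℝ) < ‖mApp D v‖ ^ 2 := pow_pos (norm_pos_iff.2 hDvne) 2
      have hmem : |⟪gradient f (υs + v) - gradient f υs, v⟫ - ⟪mApp F v, v⟫| /
          ‖mApp D v‖ ^ 2 ∈ {x : ℝ | ∃ u : EuclideanSpace ℝ (Fin p), u ≠ 0 ∧
          ‖mApp S u‖ ≤ 4 / 3 * r ∧
          x = |⟪gradient f (υs + u) - gradient f υs, u⟫ - ⟪mApp F u, u⟫| /
            ‖mApp D u‖ ^ 2} := ⟨v, hv0, le_of_eq hSv, rfl⟩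
      have hle := le_csSup hBdd hmem
      rw [← hδ3] at hle
      have hnn : (0:ℝ) ≤ |⟪gradient f (υs + v) - gradient f υs, v⟫ - ⟪mApp F v, v⟫| /
          ‖mApp D v‖ ^ 2 := by positivity
      have hδ3nn : (0:ℝ) ≤ δ3 := hnn.trans hle
      have hdel : |⟪gradient f (υs + v) - gradient f υs, v⟫ - ⟪mApp F v, v⟫| ≤
          δ3 * ‖mApp D v‖ ^ 2 := (div_le_iff₀ hDvpos).1 hle
      have hmono := grad_mono f hconv hdiff (υs + v) υt
      rw [hgt] at hmono
      have hsub : υs + v - υt = (t - 1) • u0 := by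
        rw [hvdef, hu0def, sub_smul, one_smul]
        abel
      rw [hsub, real_inner_smul_right, real_inner_smul_right] at hmono
      have hneg : t - 1 < 0 := by linarith
      have h5 : ⟪gradient f (υs + v), u0⟫ ≤ ⟪-ξ, u0⟫ :=
        (mul_le_mul_left_of_neg hneg).1 hmono
      have h6 : ⟪gradient f (υs + v), v⟫ ≤ -⟪ξ, v⟫ := by
        calc ⟪gradient f (υs + v), v⟫ = t * ⟪gradient f (υs + v), u0⟫ := by
              rw [hvdef, real_inner_smul_right]
        _ ≤ t * ⟪-ξ, u0⟫ := mul_le_mul_of_nonneg_left h5 ht0.le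
        _ = ⟪-ξ, v⟫ := by rw [hvdef, real_inner_smul_right]
        _ = -⟪ξ, v⟫ := by rw [inner_neg_left]
      have h7 : ⟪gradient f (υs + v), v⟫ ≤ r * (4 / 3 * r) := by
        refine h6.trans ?_
        have := hxiv v
        rwa [hSv] at this
      have h8 : ⟪gradient f (υs + v) - gradient f υs, v⟫ = ⟪gradient f (υs + v), v⟫ := by
        rw [hgrad, sub_zero]
      rw [h8] at hdel
      have h9 := abs_le.1 hdel
      have h10 : δ3 * ‖mApp D v‖ ^ 2 ≤ δ3 * (κ ^ 2 * ‖mApp S v‖ ^ 2) :=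
        mul_le_mul_of_nonneg_left (hLo v) hδ3nn
      have hSv2 : (0:ℝ) < ‖mApp S v‖ ^ 2 := by rw [hSv]; positivity
      have h11 : δ3 * (κ ^ 2 * ‖mApp S v‖ ^ 2) < 1 / 4 * ‖mApp S v‖ ^ 2 := by
        calc δ3 * (κ ^ 2 * ‖mApp S v‖ ^ 2) = δ3 * κ ^ 2 * ‖mApp S v‖ ^ 2 := by ring
        _ < 1 / 4 * ‖mApp S v‖ ^ 2 := mul_lt_mul_of_pos_right hmain hSv2
      have hFv : ⟪mApp F v, v⟫ = ‖mApp S v‖ ^ 2 := hFinner v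
      rw [hSv] at hFv h10 h11
      rw [hFv] at h9
      linarith [h9.1, h7, h10, h11]
    refine ⟨hmain1, ?_⟩
    have hD2 := hLo (υt - υs)
    have hsq : ‖mApp S (υt - υs)‖ ^ 2 ≤ (4 / 3 * r) ^ 2 :=
      pow_le_pow_left₀ (norm_nonneg _) hmain1 2
    have h12 : ‖mApp D (υt - υs)‖ ^ 2 ≤ (4 * κ / 3 * r) ^ 2 := by
      calc ‖mApp D (υt - υs)‖ ^ 2 ≤ κ ^ 2 * ‖mApp S (υt - υs)‖ ^ 2 := hD2
      _ ≤ κ ^ 2 * (4 / 3 * r) ^ 2 := mul_le_mul_of_nonneg_left hsq (sq_nonneg κ)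
      _ = (4 * κ / 3 * r) ^ 2 := by ring
    have := le_of_pow_le_pow_left₀ (two_ne_zero) (by positivity : (0:ℝ) ≤ 4 * κ / 3 * r) h12
    exact this
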